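/- arXiv:2206.03654 — 2 statements merged into one kernel-verified Lean document; each statement's English description precedes it below -/
import Mathlib

section
/- Let (Ω, μ) be a probability space, α ∈ [0,1), t ∈ ℕ. Let o₀, …, o_t be random variables taking values in {0,1}, and let W₀, …, W_t be square-integrable random variables with E[W_i] = 0 and Var(W_i) = σ² for all i, such that for each i, W_i is independent of o_i, and the postsynaptic potentials x_i = W_i·o_i (i = 0,…,t) are mutually independent. Define u(0) = 0 and u(i+1) = α·u(i) + (1−α)·x_i. Then Var(u(t+1)) = σ² · Σ_{i=0}^{t} (1−α)²·α^{2(t−i)}·E[o_i]. -/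
open MeasureTheory ProbabilityTheory Finset

/-- Lemma 1: under the LIF recursion with zero-mean weights of variance `σ²`,
each independent of the corresponding spike, and mutually independent inputs
`x i = W i · o i`, the membrane potential variance is
`Var(u (t+1)) = σ² · Σ_{i=0}^{t} (1−α)²·α^(2(t−i))·E[o i]`. -/
theorem variance_lif_potential
    {Ω : Type*} [MeasurableSpace Ω] (μ : Measure Ω) [IsProbabilityMeasure μ]
    (α : ℝ) (hα : α ∈ Set.Ico (0 : ℝ) 1)
    (t : ℕ) (σ2 : ℝ)
    (o W x : ℕ → Ω → ℝ) (u : ℕ → Ω → ℝ)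
    (ho_meas : ∀ i, Measurable (o i))
    (ho01 : ∀ i, ∀ ω, o i ω = 0 ∨ o i ω = 1)
    (hW : ∀ i, MemLp (W i) 2 μ)
    (hWmean : ∀ i, μ[W i] = 0)
    (hWvar : ∀ i, variance (W i) μ = σ2)
    (hindep : ∀ i, IndepFun (W i) (o i) μ)
    (hx : ∀ i, x i = fun ω => W i ω * o i ω)
    (hx_indep : iIndepFun
      (fun i : Fin (t + 1) => x i) μ)
    (hu0 : u 0 = fun _ => 0)
    (hurec : ∀ i, u (i + 1) = fun ω => α * u i ω + (1 - α) * x i ω) :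
    variance (u (t + 1)) μ
      = σ2 * ∑ i ∈ Finset.range (t + 1), (1 - α) ^ 2 * α ^ (2 * (t - i)) * μ[o i] := by
  -- closed form for `u (n+1)` as a weighted sum of the inputs
  have hclosed : ∀ n, u (n + 1)
      = fun ω => ∑ i ∈ Finset.range (n + 1), (1 - α) * α ^ (n - i) * x i ω := by
    intro n
    induction n with
    | zero =>
      funext ω
      simp [hurec 0, hu0]
    | succ n ih =>
      funext ω
      rw [hurec (n + 1)]
      simp only [ih]
      rw [Finset.mul_sum]
      conv_rhs => rw [Finset.sum_range_succ]
      congr 1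
      · apply Finset.sum_congr rfl
        intro i hi
        have hle : i ≤ n := Nat.lt_succ_iff.mp (Finset.mem_range.mp hi)
        have h1 : n + 1 - i = (n - i) + 1 := by omega
        rw [h1]
        ring
      · simp
  -- the inputs are in L²
  have hx_mem : ∀ i, MemLp (x i) 2 μ := by
    intro i
    rw [hx i]
    have hmeas : AEStronglyMeasurable (fun ω => W i ω * o i ω) μ :=
      (hW i).aestronglyMeasurable.mul (ho_meas i).aestronglyMeasurable
    refine (hW i).mono hmeas (Filter.Eventually.of_forall fun ω => ?_)
    rcases ho01 i ω with h | h <;> simp [h, Real.norm_eq_abs, abs_nonneg]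
  -- the spikes are integrable
  have ho_int : ∀ i, Integrable (o i) μ := by
    intro i
    refine (integrable_const (1 : ℝ)).mono (ho_meas i).aestronglyMeasurable
      (Filter.Eventually.of_forall fun ω => ?_)
    rcases ho01 i ω with h | h <;> simp [h, Real.norm_eq_abs]
  -- variance of each input
  have hvar_x : ∀ i, variance (x i) μ = σ2 * μ[o i] := by
    intro i
    have hWint : Integrable (W i) μ := (hW i).integrable one_le_two
    have hWsq : Integrable (fun ω => W i ω ^ 2) μ := by
      have := (hW i).integrable_sq
      simpa using this
    have hsq_indep : IndepFun (fun ω => W i ω ^ 2) (o i) μ :=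
      (hindep i).comp (measurable_id.pow_const 2) measurable_id
    have hWsq_int : μ[fun ω => W i ω ^ 2] = σ2 := by
      have h := variance_eq_sub (hW i)
      rw [hWmean i] at h
      rw [hWvar i] at h
      simp only [Pi.pow_apply] at h
      simpa using h.symm
    rw [variance_eq_sub (hx_mem i)]
    have h1 : μ[(x i) ^ 2] = σ2 * μ[o i] := by
      have hxsq : (x i) ^ 2 = fun ω => W i ω ^ 2 * o i ω := by
        funext ω
        simp only [Pi.pow_apply, hx i]
        rcases ho01 i ω with h | h <;> simp [h] <;> ring
      rw [hxsq, show (fun ω => W i ω ^ 2 * o i ω) = (fun ω => W i ω ^ 2) * o i from rfl,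
        hsq_indep.integral_mul_eq_mul_integral hWsq.aestronglyMeasurable (ho_int i).aestronglyMeasurable, hWsq_int]
    have h2 : μ[x i] = 0 := by
      rw [hx i, show (fun ω => W i ω * o i ω) = W i * o i from rfl,
        (hindep i).integral_mul_eq_mul_integral hWint.aestronglyMeasurable (ho_int i).aestronglyMeasurable, hWmean i, zero_mul]
    rw [h1, h2]
    ring
  -- rewrite `u (t+1)` as a sum of functions
  have hrepr : u (t + 1)
      = ∑ i ∈ Finset.range (t + 1), (fun ω => (1 - α) * α ^ (t - i) * x i ω) := by
    rw [hclosed t]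
    funext ω
    rw [Finset.sum_apply]
  -- each summand is in L²
  have hmem : ∀ i ∈ Finset.range (t + 1),
      MemLp (fun ω => (1 - α) * α ^ (t - i) * x i ω) 2 μ := by
    intro i _
    exact (hx_mem i).const_mul _
  -- pairwise independence of the summands
  have hpair : Set.Pairwise ↑(Finset.range (t + 1))
      (fun i j => IndepFun (fun ω => (1 - α) * α ^ (t - i) * x i ω)
        (fun ω => (1 - α) * α ^ (t - j) * x j ω) μ) := by
    intro i hi j hj hij
    have hi' : i < t + 1 := Finset.mem_range.mp (Finset.mem_coe.mp hi)
    have hj' : j < t + 1 := Finset.mem_range.mp (Finset.mem_coe.mp hj)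
    have hne : (⟨i, hi'⟩ : Fin (t + 1)) ≠ ⟨j, hj'⟩ := by
      simpa [Fin.ext_iff] using hij
    have hbase : IndepFun (x i) (x j) μ := hx_indep.indepFun hne
    exact hbase.comp (measurable_const_mul _) (measurable_const_mul _)
  rw [hrepr, IndepFun.variance_sum hmem hpair]
  rw [Finset.mul_sum]
  apply Finset.sum_congr rfl
  intro i _
  have hsmul : variance (fun ω => (1 - α) * α ^ (t - i) * x i ω) μ
      = ((1 - α) * α ^ (t - i)) ^ 2 * variance (x i) μ :=
    variance_smul ((1 - α) * α ^ (t - i)) (x i) μ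
  rw [hsmul, hvar_x i]
  have hpow : α ^ (2 * (t - i)) = (α ^ (t - i)) ^ 2 := by
    rw [← pow_mul, Nat.mul_comm]
  rw [hpow]
  ring
end

section
/- Let (Ω, μ) be a probability space, α ∈ (0,1), V_th > 0, and t ∈ ℕ. Let o₀, …, o_t be {0,1}-valued random variables, W₀, …, W_t square-integrable random variables with E[W_i] = 0 and Var(W_i) = σ², each W_i independent of o_i, and the inputs x_i = W_i·o_i mutually independent. Define u(0) = 0, u(i+1) = α·u(i) + (1−α)·x_i, and suppose the distribution of u(t+1) is symmetric (u(t+1) and −u(t+1) identically distributed). Define the output spike o_{t+1} = 1 if u(t+1) > V_th and 0 otherwise. Then, with ε = σ²/(2·V_th²), E[o_{t+1}] ≤ ε · Σ_{i=0}^{t} E[o_i]. -/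
open MeasureTheory ProbabilityTheory Finset

/-- Theorem 1: for an LIF neuron with membrane potential
`u (i+1) = α·u i + (1−α)·W i·o i` driven by {0,1}-valued spikes `o i` weighted by
zero-mean weights of variance `σ²`, if `u (t+1)` is symmetric then the output spike
`o_{t+1} = H(u_{t+1} − V_th)` satisfies
`E[o_{t+1}] ≤ ε · Σ_{i=0}^{t} E[o i]` with `ε = σ²/(2·V_th²)`. -/
theorem spike_expectation_bound
    {Ω : Type*} [MeasurableSpace Ω] (μ : Measure Ω) [IsProbabilityMeasure μ]
    (α : ℝ) (hα : α ∈ Set.Ioo (0 : ℝ) 1)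
    (Vth : ℝ) (hVth : 0 < Vth)
    (t : ℕ) (σ2 : ℝ)
    (o W x : ℕ → Ω → ℝ) (u : ℕ → Ω → ℝ) (oT : Ω → ℝ)
    (ho_meas : ∀ i, Measurable (o i))
    (ho01 : ∀ i, ∀ ω, o i ω = 0 ∨ o i ω = 1)
    (hW : ∀ i, MemLp (W i) 2 μ)
    (hWmean : ∀ i, μ[W i] = 0)
    (hWvar : ∀ i, variance (W i) μ = σ2)
    (hindep : ∀ i, IndepFun (W i) (o i) μ)
    (hx : ∀ i, x i = fun ω => W i ω * o i ω)
    (hx_indep : iIndepFun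
      (fun i : Fin (t + 1) => x i) μ)
    (hu0 : u 0 = fun _ => 0)
    (hurec : ∀ i, u (i + 1) = fun ω => α * u i ω + (1 - α) * x i ω)
    (husymm : Measure.map (u (t + 1)) μ = Measure.map (fun ω => -(u (t + 1) ω)) μ)
    (hoT : ∀ ω, oT ω = if Vth < u (t + 1) ω then 1 else 0) :
    μ[oT] ≤ σ2 / (2 * Vth ^ 2) * ∑ i ∈ Finset.range (t + 1), μ[o i] := by
  obtain ⟨hα0, hα1⟩ := hα
  have hσ2 : 0 ≤ σ2 := (hWvar 0) ▸ variance_nonneg _ _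
  -- basic integrability facts
  have ho_int : ∀ i, Integrable (o i) μ := fun i =>
    (integrable_const (1:ℝ)).mono (ho_meas i).aestronglyMeasurable
      (ae_of_all _ fun ω => by rcases ho01 i ω with h | h <;> simp [h])
  have ho_nonneg : ∀ i, 0 ≤ μ[o i] := fun i =>
    integral_nonneg fun ω => by rcases ho01 i ω with h | h <;> simp [h]
  have hxm : ∀ i, AEStronglyMeasurable (x i) μ := fun i => by
    rw [hx i]
    exact (hW i).aestronglyMeasurable.mul (ho_meas i).aestronglyMeasurable
  have hxL2 : ∀ i, MemLp (x i) 2 μ := fun i =>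
    (hW i).mono (hxm i) (ae_of_all _ fun ω => by
      rw [hx i]; rcases ho01 i ω with h | h <;> simp [h])
  -- mean of x i is 0
  have hxmean : ∀ i, μ[x i] = 0 := fun i => by
    rw [hx i]
    have := (hindep i).integral_mul_eq_mul_integral (hW i).aestronglyMeasurable (ho_int i).aestronglyMeasurable
    simpa [Pi.mul_apply, hWmean i] using this
  -- variance of x i is σ2 * E[o i]
  have hWsq : ∀ i, μ[fun ω => W i ω ^ 2] = σ2 := fun i => by
    have h := variance_eq_sub (hW i)
    rw [hWmean i, hWvar i] at h
    simpa using h.symm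
  have hxvar : ∀ i, variance (x i) μ = σ2 * μ[o i] := fun i => by
    rw [variance_eq_sub (hxL2 i), hxmean i]
    have hsq : (x i) ^ 2 = fun ω => W i ω ^ 2 * o i ω := by
      funext ω
      rw [Pi.pow_apply, hx i]
      rcases ho01 i ω with h | h <;> simp [h] <;> ring
    have hind2 : IndepFun (fun ω => W i ω ^ 2) (o i) μ :=
      (hindep i).comp (measurable_id.pow_const 2) measurable_id
    have hmul := hind2.integral_mul_eq_mul_integral (hW i).integrable_sq.aestronglyMeasurable (ho_int i).aestronglyMeasurable
    rw [hsq]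
    simpa [Pi.mul_apply, hWsq i] using hmul
  -- closed form for u (n+1)
  have hclosed : ∀ n, u (n + 1) =
      fun ω => ∑ i ∈ Finset.range (n + 1), α ^ (n - i) * (1 - α) * x i ω := by
    intro n
    induction n with
    | zero => funext ω; rw [hurec 0, hu0]; simp
    | succ n ih =>
      funext ω
      rw [hurec (n + 1), ih]
      simp only
      rw [Finset.sum_range_succ (fun i => α ^ (n + 1 - i) * (1 - α) * x i ω),
        Finset.mul_sum]
      congr 1
      · apply Finset.sum_congr rfl
        intro i hi
        have hi' : i ≤ n := Nat.lt_succ_iff.mp (Finset.mem_range.mp hi)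
        have he : n + 1 - i = (n - i) + 1 := by omega
        rw [he, pow_succ]
        ring
      · have he : n + 1 - (n + 1) = 0 := by omega
        rw [he]
        norm_num
  set U := u (t + 1) with hU
  set c : ℕ → ℝ := fun i => α ^ (t - i) * (1 - α) with hc
  have hc01 : ∀ i, 0 ≤ c i ∧ c i ≤ 1 := fun i => by
    constructor
    · exact mul_nonneg (pow_nonneg hα0.le _) (by linarith)
    · calc c i ≤ 1 * (1 - α) := by
            apply mul_le_mul_of_nonneg_right _ (by linarith)
            exact pow_le_one₀ hα0.le hα1.le
        _ ≤ 1 := by linarith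
  set Y : Fin (t + 1) → Ω → ℝ := fun i => (c i) • x i with hY
  have hYL2 : ∀ i : Fin (t + 1), MemLp (Y i) 2 μ := fun i => (hxL2 i).const_smul (c i)
  have hUsum : U = ∑ i : Fin (t + 1), Y i := by
    rw [hU, hclosed t]
    funext ω
    rw [Finset.sum_apply]
    rw [← Fin.sum_univ_eq_sum_range (fun i => α ^ (t - i) * (1 - α) * x i ω) (t + 1)]
    apply Finset.sum_congr rfl
    intro i _
    simp [hY, hc]
  have hUL2 : MemLp U 2 μ := by
    rw [hUsum]; exact memLp_finset_sum' _ (fun i _ => hYL2 i)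
  -- mean of U is 0
  have hUmean : μ[U] = 0 := by
    rw [hUsum]
    simp only [Finset.sum_apply]
    rw [integral_finset_sum _ (fun i _ => (hYL2 i).integrable one_le_two)]
    apply Finset.sum_eq_zero
    intro i _
    have : μ[Y i] = c i * μ[x i] := by
      simp only [hY, Pi.smul_apply, smul_eq_mul]
      exact integral_const_mul _ _
    rw [this, hxmean i, mul_zero]
  -- variance of U
  have hUvar : variance U μ = ∑ i : Fin (t + 1), (c i) ^ 2 * (σ2 * μ[o i]) := by
    rw [hUsum]
    rw [IndepFun.variance_sum (fun i _ => hYL2 i)]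
    · apply Finset.sum_congr rfl
      intro i _
      have hYi : Y i = (c (i : ℕ)) • x (i : ℕ) := rfl
      rw [hYi, variance_smul, hxvar i]
    · intro i _ j _ hij
      have h := hx_indep.indepFun hij
      have := h.comp (measurable_const_mul (c i)) (measurable_const_mul (c j))
      exact this
  have hUsq : μ[fun ω => U ω ^ 2] = variance U μ := by
    have h := variance_eq_sub hUL2
    rw [hUmean] at h
    simpa using h.symm
  -- symmetry: E[oT] = E[oT']
  set g : ℝ → ℝ := fun y => if Vth < y then 1 else 0 with hg
  have hgm : Measurable g := Measurable.ite measurableSet_Ioi measurable_const measurable_const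
  have hUaem : AEMeasurable U μ := hUL2.aestronglyMeasurable.aemeasurable
  set oT' : Ω → ℝ := fun ω => if Vth < -(U ω) then 1 else 0 with hoT'
  have hsymm : μ[oT] = μ[oT'] := by
    have e1 : μ[oT] = ∫ y, g y ∂(Measure.map U μ) := by
      rw [integral_map hUaem hgm.aestronglyMeasurable]
      apply integral_congr_ae
      exact ae_of_all _ fun ω => (hoT ω)
    have e2 : (∫ y, g y ∂(Measure.map (fun ω => -(U ω)) μ)) = μ[oT'] := by
      exact integral_map hUaem.neg hgm.aestronglyMeasurable
    rw [e1, husymm, e2]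
  -- integrability of oT, oT'
  have hoTm : AEStronglyMeasurable oT μ := by
    have : oT = fun ω => g (U ω) := funext fun ω => hoT ω
    rw [this]
    exact (hgm.comp_aemeasurable hUaem).aestronglyMeasurable
  have hoT'm : AEStronglyMeasurable oT' μ := by
    have : oT' = fun ω => g (-(U ω)) := rfl
    rw [this]
    exact (hgm.comp_aemeasurable hUaem.neg).aestronglyMeasurable
  have hoT_int : Integrable oT μ :=
    (integrable_const (1:ℝ)).mono hoTm (ae_of_all _ fun ω => by
      rw [hoT ω]; split <;> simp)
  have hoT'_int : Integrable oT' μ :=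
    (integrable_const (1:ℝ)).mono hoT'm (ae_of_all _ fun ω => by
      rw [hoT']; simp only; split <;> simp)
  -- pointwise bound
  have hpt : ∀ ω, oT ω + oT' ω ≤ U ω ^ 2 / Vth ^ 2 := by
    intro ω
    rw [hoT ω, hoT']
    simp only
    rcases lt_or_ge Vth (U ω) with h1 | h1
    · have h2 : ¬ Vth < -(U ω) := by linarith
      rw [if_pos h1, if_neg h2]
      have hVU : Vth ^ 2 ≤ U ω ^ 2 := by nlinarith
      have hd := (one_le_div (pow_pos hVth 2)).mpr hVU
      linarith
    · rcases lt_or_ge Vth (-(U ω)) with h2 | h2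
      · rw [if_neg (not_lt.mpr h1), if_pos h2]
        have hVU : Vth ^ 2 ≤ U ω ^ 2 := by nlinarith
        have hd := (one_le_div (pow_pos hVth 2)).mpr hVU
        linarith
      · rw [if_neg (not_lt.mpr h1), if_neg (not_lt.mpr h2)]
        have := div_nonneg (sq_nonneg (U ω)) (sq_nonneg Vth)
        linarith
  have hsum_int : Integrable (fun ω => oT ω + oT' ω) μ := hoT_int.add hoT'_int
  have hsq_int : Integrable (fun ω => U ω ^ 2 / Vth ^ 2) μ := hUL2.integrable_sq.div_const _
  have hkey : μ[oT] + μ[oT'] ≤ μ[fun ω => U ω ^ 2 / Vth ^ 2] := by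
    rw [← integral_add hoT_int hoT'_int]
    exact integral_mono hsum_int hsq_int hpt
  have hdiv : μ[fun ω => U ω ^ 2 / Vth ^ 2] = variance U μ / Vth ^ 2 := by
    rw [← hUsq, integral_div]
  -- sum bound
  have hvar_le : variance U μ ≤ σ2 * ∑ i ∈ Finset.range (t + 1), μ[o i] := by
    rw [hUvar]
    have : ∑ i : Fin (t + 1), (c i) ^ 2 * (σ2 * μ[o i])
        ≤ ∑ i : Fin (t + 1), σ2 * μ[o i] := by
      apply Finset.sum_le_sum
      intro i _
      have h1 := (hc01 i).1
      have h2 := (hc01 i).2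
      have h3 : (c i) ^ 2 ≤ 1 := by nlinarith
      have h4 : 0 ≤ σ2 * μ[o i] := mul_nonneg hσ2 (ho_nonneg i)
      nlinarith
    calc _ ≤ ∑ i : Fin (t + 1), σ2 * μ[o i] := this
      _ = σ2 * ∑ i ∈ Finset.range (t + 1), μ[o i] := by
          rw [Fin.sum_univ_eq_sum_range (fun i => σ2 * μ[o i]), ← Finset.mul_sum]
  -- conclude
  have h2Vth : (0:ℝ) < Vth ^ 2 := pow_pos hVth 2
  set S := ∑ i ∈ Finset.range (t + 1), μ[o i] with hS
  have hfinal : 2 * μ[oT] ≤ σ2 * S / Vth ^ 2 := by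
    have h1 : μ[oT] + μ[oT] ≤ variance U μ / Vth ^ 2 := by
      rw [← hdiv]
      calc μ[oT] + μ[oT] = μ[oT] + μ[oT'] := by rw [hsymm]
        _ ≤ _ := hkey
    have h2 : variance U μ / Vth ^ 2 ≤ σ2 * S / Vth ^ 2 := by
      gcongr
    linarith
  have heq : σ2 / (2 * Vth ^ 2) * S = σ2 * S / Vth ^ 2 / 2 := by
    field_simp
  rw [heq]
  linarith
end
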